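/- Let f* be an optimal randomized prediction rule for the DP-constrained fair classification problem with ε = 0: f* satisfies that Ŷ is statistically independent of S, and its risk E[1{Ŷ ≠ Y}] is minimal among all randomized prediction rules Q_{Ŷ|X,S} under which Ŷ is independent of S. Suppose Y = h(X, S) for a deterministic function h : 𝒳 × 𝒮 → 𝒴, and s_max ∈ 𝒮 satisfies P_S(s_max) > 1/2. Then for the prediction variable Ŷ induced by f*, for every s ∈ 𝒮: P_{Ŷ|S=s} = P_{Y|S=s_max}. -/

import Mathlib

set_option linter.unusedSectionVars false

open Finset

noncomputable section

variable {𝒳 𝒴 𝒮 : Type*} [Fintype 𝒳] [Fintype 𝒴] [Fintype 𝒮] [DecidableEq 𝒴]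

/-- Total variation distance between two finitely supported distributions on `𝒴`,
`TV(p, q) = (1/2) ∑ y, |p y - q y|`. -/
def TV (p q : 𝒴 → ℝ) : ℝ := (1 / 2) * ∑ y, |p y - q y|

/-- Marginal distribution of the sensitive attribute `S` under the joint `P` of `(X, Y, S)`. -/
def margS (P : 𝒳 → 𝒴 → 𝒮 → ℝ) (s : 𝒮) : ℝ := ∑ x, ∑ y, P x y s

/-- Conditional distribution of the label `Y` given `S = s`. -/
def condYS (P : 𝒳 → 𝒴 → 𝒮 → ℝ) (s : 𝒮) (y : 𝒴) : ℝ := (∑ x, P x y s) / margS P s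

/-- A randomized prediction rule `Q`: for every `(x, s)`, `Q x s` is a probability
distribution on labels. -/
def IsRule (Q : 𝒳 → 𝒮 → 𝒴 → ℝ) : Prop :=
  (∀ x s y, 0 ≤ Q x s y) ∧ ∀ x s, ∑ y, Q x s y = 1

/-- The risk `E[1{Ŷ ≠ Y}]` of the rule `Q` under the joint distribution induced by `P` and
`Q` (in which `Ŷ` is conditionally independent of `Y` given `(X, S)`). -/
def risk (P : 𝒳 → 𝒴 → 𝒮 → ℝ) (Q : 𝒳 → 𝒮 → 𝒴 → ℝ) : ℝ :=
  ∑ x, ∑ y, ∑ s, ∑ yh, P x y s * Q x s yh * (if yh = y then (0 : ℝ) else 1)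

/-- Joint distribution of `(Ŷ, S)` induced by `P` and the rule `Q`. -/
def jointYhatS (P : 𝒳 → 𝒴 → 𝒮 → ℝ) (Q : 𝒳 → 𝒮 → 𝒴 → ℝ) (yh : 𝒴) (s : 𝒮) : ℝ :=
  ∑ x, ∑ y, P x y s * Q x s yh

/-- Marginal distribution of the prediction `Ŷ`. -/
def margYhat (P : 𝒳 → 𝒴 → 𝒮 → ℝ) (Q : 𝒳 → 𝒮 → 𝒴 → ℝ) (yh : 𝒴) : ℝ :=
  ∑ s, jointYhatS P Q yh s

/-- Conditional distribution of the prediction `Ŷ` given `S = s`. -/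
def condYhatS (P : 𝒳 → 𝒴 → 𝒮 → ℝ) (Q : 𝒳 → 𝒮 → 𝒴 → ℝ) (s : 𝒮) (yh : 𝒴) : ℝ :=
  jointYhatS P Q yh s / margS P s

/-- The prediction `Ŷ` induced by rule `Q` is statistically independent of `S`. -/
def IndepYhatS (P : 𝒳 → 𝒴 → 𝒮 → ℝ) (Q : 𝒳 → 𝒮 → 𝒴 → ℝ) : Prop :=
  ∀ s yh, condYhatS P Q s yh = margYhat P Q yh

/-! ### Auxiliary definitions and lemmas -/

/-- `1 - ∑ min(p,q)`; equals TV distance when `p, q` are distributions. -/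
def Dgap (p q : 𝒴 → ℝ) : ℝ := 1 - ∑ y, min (p y) (q y)

lemma Dgap_comm (p q : 𝒴 → ℝ) : Dgap p q = Dgap q p := by
  simp [Dgap, min_comm]

lemma Dgap_eq (p q : 𝒴 → ℝ) (hp1 : ∑ y, p y = 1) (hq1 : ∑ y, q y = 1) :
    Dgap p q = (1/2) * ∑ y, |p y - q y| := by
  have key : ∀ y : 𝒴, min (p y) (q y) = (p y + q y - |p y - q y|) / 2 := by
    intro y
    rcases le_total (p y) (q y) with hy | hy
    · rw [min_eq_left hy, abs_of_nonpos (by linarith)]; ring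
    · rw [min_eq_right hy, abs_of_nonneg (by linarith)]; ring
  have h2 : ∑ y, min (p y) (q y)
      = ((∑ y, (p y + q y)) - ∑ y, |p y - q y|) / 2 := by
    rw [Finset.sum_congr rfl fun y _ => key y, ← Finset.sum_div, Finset.sum_sub_distrib]
  rw [Dgap, h2, Finset.sum_add_distrib, hp1, hq1]; ring

lemma Dgap_nonneg (p q : 𝒴 → ℝ) (hp1 : ∑ y, p y = 1) : 0 ≤ Dgap p q := by
  have : ∑ y, min (p y) (q y) ≤ ∑ y, p y :=
    Finset.sum_le_sum fun y _ => min_le_left _ _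
  rw [Dgap]; linarith

lemma min_eq_right_of_sum (u v : 𝒴 → ℝ) (h : ∑ y, min (u y) (v y) = ∑ y, v y) (y : 𝒴) :
    min (u y) (v y) = v y := by
  by_contra hne
  have hlt : ∑ z, min (u z) (v z) < ∑ z, v z :=
    Finset.sum_lt_sum (fun i _ => min_le_right _ _)
      ⟨y, Finset.mem_univ y, lt_of_le_of_ne (min_le_right _ _) hne⟩
  exact absurd h (ne_of_lt hlt)

open scoped Classical in
/-- residual distribution used to redistribute excess mass -/
def ruleR (p q : 𝒴 → ℝ) (yh : 𝒴) : ℝ :=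
  if Dgap p q = 0 then 0 else (q yh - min (p yh) (q yh)) / Dgap p q

open scoped Classical in
/-- optimal-coupling conditional: given true label `y`, distribution of `yh`. -/
def ruleF (p q : 𝒴 → ℝ) (y yh : 𝒴) : ℝ :=
  if p y = 0 then q yh
  else (min (p y) (q y) * (if yh = y then 1 else 0)
        + (p y - min (p y) (q y)) * ruleR p q yh) / p y

section RuleLemmas
variable (p q : 𝒴 → ℝ) (hp0 : ∀ y, 0 ≤ p y) (hp1 : ∑ y, p y = 1)
  (hq0 : ∀ y, 0 ≤ q y) (hq1 : ∑ y, q y = 1)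

include hp0 hp1 hq0 hq1

lemma ruleR_nonneg (yh : 𝒴) : 0 ≤ ruleR p q yh := by
  rw [ruleR]
  split
  · exact le_refl 0
  · next hD =>
    have hDpos : 0 < Dgap p q := lt_of_le_of_ne (Dgap_nonneg p q hp1) (Ne.symm hD)
    exact div_nonneg (by linarith [min_le_right (p yh) (q yh)]) hDpos.le

lemma sum_sub_min_right : ∑ yh, (q yh - min (p yh) (q yh)) = Dgap p q := by
  rw [Finset.sum_sub_distrib, hq1, Dgap]

lemma sum_sub_min_left : ∑ yh, (p yh - min (p yh) (q yh)) = Dgap p q := by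
  rw [Finset.sum_sub_distrib, hp1, Dgap]

lemma ruleR_sum_of_ne (hD : Dgap p q ≠ 0) : ∑ yh, ruleR p q yh = 1 := by
  simp only [ruleR, if_neg hD]
  rw [← Finset.sum_div, sum_sub_min_right p q hp0 hp1 hq0 hq1, div_self hD]

lemma min_eq_q_of_zero (hD : Dgap p q = 0) (y : 𝒴) : min (p y) (q y) = q y := by
  apply min_eq_right_of_sum
  rw [hq1]
  rw [Dgap] at hD; linarith

lemma min_eq_p_of_zero (hD : Dgap p q = 0) (y : 𝒴) : min (p y) (q y) = p y := by
  have := min_eq_q_of_zero q p hq0 hq1 hp0 hp1 (by rwa [Dgap_comm]) y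
  rw [min_comm] at this
  exact this

lemma ruleF_nonneg (y yh : 𝒴) : 0 ≤ ruleF p q y yh := by
  rw [ruleF]
  split
  · exact hq0 yh
  · next hpy =>
    have hppos : 0 < p y := lt_of_le_of_ne (hp0 y) (Ne.symm hpy)
    apply div_nonneg _ hppos.le
    have h1 : (0:ℝ) ≤ min (p y) (q y) := le_min (hp0 y) (hq0 y)
    have h2 : (0:ℝ) ≤ p y - min (p y) (q y) := by linarith [min_le_left (p y) (q y)]
    have h3 := ruleR_nonneg p q hp0 hp1 hq0 hq1 yh
    have h4 : (0:ℝ) ≤ (if yh = y then (1:ℝ) else 0) := by split <;> norm_num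
    positivity

lemma ruleF_sum (y : 𝒴) : ∑ yh, ruleF p q y yh = 1 := by
  simp only [ruleF]
  split
  · exact hq1
  · next hpy =>
    rw [← Finset.sum_div, Finset.sum_add_distrib, ← Finset.mul_sum, ← Finset.mul_sum]
    have hs1 : ∑ yh, (if yh = y then (1:ℝ) else 0) = 1 := by simp
    rw [hs1, mul_one]
    by_cases hD : Dgap p q = 0
    · have hmin := min_eq_p_of_zero p q hp0 hp1 hq0 hq1 hD y
      simp only [ruleR, if_pos hD]
      rw [hmin]
      simp [div_self hpy]
    · rw [ruleR_sum_of_ne p q hp0 hp1 hq0 hq1 hD, mul_one]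
      field_simp
      ring

lemma mul_ruleF (y yh : 𝒴) :
    p y * ruleF p q y yh
      = min (p y) (q y) * (if yh = y then 1 else 0)
        + (p y - min (p y) (q y)) * ruleR p q yh := by
  rw [ruleF]
  split
  · next hpy =>
    have hmin : min (p y) (q y) = 0 := by
      rw [hpy, min_eq_left (hq0 y)]
    rw [hmin, hpy]; ring
  · next hpy => field_simp

lemma ruleF_marg (yh : 𝒴) : ∑ y, p y * ruleF p q y yh = q yh := by
  have hkey := fun y => mul_ruleF p q hp0 hp1 hq0 hq1 y yh
  rw [Finset.sum_congr rfl fun y _ => hkey y, Finset.sum_add_distrib]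
  have h1 : ∑ y, min (p y) (q y) * (if yh = y then (1:ℝ) else 0) = min (p yh) (q yh) := by
    rw [Finset.sum_eq_single yh]
    · simp
    · intro b _ hb
      simp [Ne.symm hb]
    · simp
  have h2 : ∑ y, (p y - min (p y) (q y)) * ruleR p q yh
      = Dgap p q * ruleR p q yh := by
    rw [← Finset.sum_mul, sum_sub_min_left p q hp0 hp1 hq0 hq1]
  rw [h1, h2]
  by_cases hD : Dgap p q = 0
  · rw [hD, min_eq_q_of_zero p q hp0 hp1 hq0 hq1 hD]; ring
  · simp only [ruleR, if_neg hD]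
    field_simp
    ring

lemma ruleF_diag : ∑ y, p y * ruleF p q y y = 1 - Dgap p q := by
  have key : ∀ y, p y * ruleF p q y y = min (p y) (q y) := by
    intro y
    rw [mul_ruleF p q hp0 hp1 hq0 hq1 y y, if_pos rfl, mul_one]
    have hz : (p y - min (p y) (q y)) * ruleR p q y = 0 := by
      rw [ruleR]
      split
      · ring
      · next hD =>
        rcases min_choice (p y) (q y) with hm | hm
        · rw [hm]; ring
        · rw [hm]; ring
    rw [hz]; ring
  rw [Finset.sum_congr rfl fun y _ => key y, Dgap]; ring

end RuleLemmas

lemma sum_swap3 {α β γ : Type*} [Fintype α] [Fintype β] [Fintype γ] (f : α → β → γ → ℝ) :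
    ∑ a, ∑ b, ∑ c, f a b c = ∑ c, ∑ b, ∑ a, f a b c := by
  calc ∑ a, ∑ b, ∑ c, f a b c = ∑ a, ∑ c, ∑ b, f a b c :=
        Finset.sum_congr rfl fun a _ => Finset.sum_comm
    _ = ∑ c, ∑ a, ∑ b, f a b c := Finset.sum_comm
    _ = ∑ c, ∑ b, ∑ a, f a b c := Finset.sum_congr rfl fun c _ => Finset.sum_comm

lemma risk_eq (P : 𝒳 → 𝒴 → 𝒮 → ℝ) (Q : 𝒳 → 𝒮 → 𝒴 → ℝ)
    (hP1 : ∑ x, ∑ y, ∑ s, P x y s = 1) (hQ1 : ∀ x s, ∑ y, Q x s y = 1) :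
    risk P Q = 1 - ∑ x, ∑ y, ∑ s, P x y s * Q x s y := by
  have key : ∀ x y s, (∑ yh, P x y s * Q x s yh * (if yh = y then (0:ℝ) else 1))
      = P x y s - P x y s * Q x s y := by
    intro x y s
    have hterm : ∀ yh, P x y s * Q x s yh * (if yh = y then (0:ℝ) else 1)
        = P x y s * Q x s yh - (if yh = y then P x y s * Q x s yh else 0) := by
      intro yh; split <;> ring
    rw [Finset.sum_congr rfl fun yh _ => hterm yh, Finset.sum_sub_distrib,
      ← Finset.mul_sum, hQ1, mul_one]
    congr 1
    simp
  rw [risk,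
    Finset.sum_congr rfl fun x _ => Finset.sum_congr rfl fun y _ =>
      Finset.sum_congr rfl fun s _ => key x y s]
  simp_rw [Finset.sum_sub_distrib]
  rw [hP1]

/-- **Corollary (ε = 0 case).** If `Y = h(X, S)` is deterministic, `P_S(s_max) > 1/2`, and
`Q` is an optimal randomized prediction rule among those with `Ŷ` independent of `S`, then
for every `s`, `P_{Ŷ|S=s} = P_{Y|S=s_max}`. -/
theorem dp_fair_optimal_inductive_bias_exact
    (P : 𝒳 → 𝒴 → 𝒮 → ℝ)
    (hP0 : ∀ x y s, 0 ≤ P x y s)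
    (hP1 : ∑ x, ∑ y, ∑ s, P x y s = 1)
    (hS : ∀ s, 0 < margS P s)
    (h : 𝒳 → 𝒮 → 𝒴) (hdet : ∀ x y s, y ≠ h x s → P x y s = 0)
    (smax : 𝒮) (hsmax : 1 / 2 < margS P smax)
    (Q : 𝒳 → 𝒮 → 𝒴 → ℝ) (hQ : IsRule Q)
    (hfair : IndepYhatS P Q)
    (hopt : ∀ Q' : 𝒳 → 𝒮 → 𝒴 → ℝ, IsRule Q' → IndepYhatS P Q' → risk P Q ≤ risk P Q') :
    ∀ s yh, condYhatS P Q s yh = condYS P smax yh := by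
  classical
  obtain ⟨hQ0, hQ1⟩ := hQ
  have hm_ne : ∀ s, margS P s ≠ 0 := fun s => (hS s).ne'
  -- the marginal of S sums to 1
  have hmsum : ∑ s, margS P s = 1 := by
    calc ∑ s, margS P s = ∑ s, ∑ y, ∑ x, P x y s := by
          refine Finset.sum_congr rfl fun s _ => ?_
          rw [margS]; exact Finset.sum_comm
      _ = ∑ x, ∑ y, ∑ s, P x y s := sum_swap3 (fun s y x => P x y s)
      _ = 1 := hP1
  -- conditional label distributions are distributions
  have hps0 : ∀ s y, 0 ≤ condYS P s y := fun s y =>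
    div_nonneg (Finset.sum_nonneg fun x _ => hP0 x y s) (hS s).le
  have ha_sum : ∀ s, ∑ y, (∑ x, P x y s) = margS P s := by
    intro s; rw [margS]; exact Finset.sum_comm
  have hps1 : ∀ s, ∑ y, condYS P s y = 1 := by
    intro s
    simp only [condYS]
    rw [← Finset.sum_div, ha_sum s, div_self (hm_ne s)]
  have ha_eq : ∀ s y, (∑ x, P x y s) = margS P s * condYS P s y := by
    intro s y
    rw [condYS, mul_div_cancel₀ _ (hm_ne s)]
  -- facts about the Yhat marginal q
  have hfair' : ∀ s yh, jointYhatS P Q yh s = margS P s * margYhat P Q yh := by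
    intro s yh
    have h1 := hfair s yh
    rw [condYhatS] at h1
    rw [(div_eq_iff (hm_ne s)).mp h1]; ring
  have hq0 : ∀ yh, 0 ≤ margYhat P Q yh := by
    intro yh
    apply Finset.sum_nonneg; intro s _
    apply Finset.sum_nonneg; intro x _
    apply Finset.sum_nonneg; intro y _
    exact mul_nonneg (hP0 x y s) (hQ0 x s yh)
  have hqsum : ∑ yh, margYhat P Q yh = 1 := by
    simp only [margYhat, jointYhatS]
    calc ∑ yh, ∑ s, ∑ x, ∑ y, P x y s * Q x s yh
        = ∑ s, ∑ yh, ∑ x, ∑ y, P x y s * Q x s yh := Finset.sum_comm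
      _ = ∑ s, ∑ x, ∑ yh, ∑ y, P x y s * Q x s yh :=
          Finset.sum_congr rfl fun s _ => Finset.sum_comm
      _ = ∑ s, ∑ x, ∑ y, ∑ yh, P x y s * Q x s yh :=
          Finset.sum_congr rfl fun s _ => Finset.sum_congr rfl fun x _ => Finset.sum_comm
      _ = ∑ s, ∑ x, ∑ y, P x y s := by
          refine Finset.sum_congr rfl fun s _ => Finset.sum_congr rfl fun x _ =>
            Finset.sum_congr rfl fun y _ => ?_
          rw [← Finset.mul_sum, hQ1, mul_one]
      _ = ∑ s, margS P s := rfl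
      _ = 1 := hmsum
  -- the general identity 1 - ∑ m (1 - D) = ∑ m D
  have hident : ∀ D : 𝒮 → ℝ,
      1 - ∑ s, margS P s * (1 - D s) = ∑ s, margS P s * D s := by
    intro D
    have : ∑ s, margS P s * D s = ∑ s, (margS P s - margS P s * (1 - D s)) := by
      refine Finset.sum_congr rfl fun s _ => ?_; ring
    rw [this, Finset.sum_sub_distrib, hmsum]
  -- Lower bound on the risk of any fair rule
  have hlow : ∑ s, margS P s * Dgap (condYS P s) (margYhat P Q) ≤ risk P Q := by
    rw [risk_eq P Q hP1 hQ1]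
    have hGle : ∀ s y, ∑ x, P x y s * Q x s y
        ≤ margS P s * min (condYS P s y) (margYhat P Q y) := by
      intro s y
      have hb1 : ∑ x, P x y s * Q x s y ≤ ∑ x, P x y s := by
        apply Finset.sum_le_sum; intro x _
        have hQle1 : Q x s y ≤ 1 := by
          rw [← hQ1 x s]
          exact Finset.single_le_sum (fun y' _ => hQ0 x s y') (Finset.mem_univ y)
        calc P x y s * Q x s y ≤ P x y s * 1 :=
              mul_le_mul_of_nonneg_left hQle1 (hP0 x y s)
          _ = P x y s := mul_one _
      have hb2 : ∑ x, P x y s * Q x s y ≤ margS P s * margYhat P Q y := by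
        rw [← hfair' s y, jointYhatS]
        apply Finset.sum_le_sum; intro x _
        exact Finset.single_le_sum
          (fun y' _ => mul_nonneg (hP0 x y' s) (hQ0 x s y)) (Finset.mem_univ y)
      have hmin : min (∑ x, P x y s) (margS P s * margYhat P Q y)
          = margS P s * min (condYS P s y) (margYhat P Q y) := by
        rw [ha_eq s y]
        rcases le_total (condYS P s y) (margYhat P Q y) with hc | hc
        · rw [min_eq_left (mul_le_mul_of_nonneg_left hc (hS s).le), min_eq_left hc]
        · rw [min_eq_right (mul_le_mul_of_nonneg_left hc (hS s).le), min_eq_right hc]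
      rw [← hmin]
      exact le_min hb1 hb2
    have hGbound : ∑ x, ∑ y, ∑ s, P x y s * Q x s y
        ≤ ∑ s, margS P s * (1 - Dgap (condYS P s) (margYhat P Q)) := by
      rw [sum_swap3 (fun x y s => P x y s * Q x s y)]
      apply Finset.sum_le_sum; intro s _
      calc ∑ y, ∑ x, P x y s * Q x s y
          ≤ ∑ y, margS P s * min (condYS P s y) (margYhat P Q y) :=
            Finset.sum_le_sum fun y _ => hGle s y
        _ = margS P s * (1 - Dgap (condYS P s) (margYhat P Q)) := by
            rw [← Finset.mul_sum, Dgap]; ring_nf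
    have := hident (fun s => Dgap (condYS P s) (margYhat P Q))
    linarith
  -- The explicit fair rule Q'
  set Q' : 𝒳 → 𝒮 → 𝒴 → ℝ :=
    fun x s yh => ruleF (condYS P s) (condYS P smax) (h x s) yh with hQ'def
  have hQ'rule : IsRule Q' :=
    ⟨fun x s y => ruleF_nonneg _ _ (hps0 s) (hps1 s) (hps0 smax) (hps1 smax) _ _,
     fun x s => ruleF_sum _ _ (hps0 s) (hps1 s) (hps0 smax) (hps1 smax) _⟩
  have hjoint' : ∀ yh s, jointYhatS P Q' yh s = margS P s * condYS P smax yh := by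
    intro yh s
    rw [jointYhatS]
    have step1 : ∀ x y, P x y s * Q' x s yh
        = P x y s * ruleF (condYS P s) (condYS P smax) y yh := by
      intro x y
      by_cases hy : y = h x s
      · subst hy; rfl
      · rw [hdet x y s hy]; ring
    rw [Finset.sum_congr rfl fun x _ => Finset.sum_congr rfl fun y _ => step1 x y,
      Finset.sum_comm]
    have step2 : ∀ y, ∑ x, P x y s * ruleF (condYS P s) (condYS P smax) y yh
        = margS P s * (condYS P s y * ruleF (condYS P s) (condYS P smax) y yh) := by
      intro y
      rw [← Finset.sum_mul, ha_eq s y]; ring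
    rw [Finset.sum_congr rfl fun y _ => step2 y, ← Finset.mul_sum,
      ruleF_marg _ _ (hps0 s) (hps1 s) (hps0 smax) (hps1 smax) yh]
  have hfairQ' : IndepYhatS P Q' := by
    intro s yh
    rw [condYhatS, hjoint' yh s, margYhat,
      Finset.sum_congr rfl fun s' _ => hjoint' yh s', ← Finset.sum_mul, hmsum, one_mul,
      mul_comm, mul_div_assoc, div_self (hm_ne s), mul_one]
  have hrisk' : risk P Q' = ∑ s, margS P s * Dgap (condYS P s) (condYS P smax) := by
    rw [risk_eq P Q' hP1 hQ'rule.2]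
    have step1 : ∀ x y s, P x y s * Q' x s y
        = P x y s * ruleF (condYS P s) (condYS P smax) y y := by
      intro x y s
      by_cases hy : y = h x s
      · subst hy; rfl
      · rw [hdet x y s hy]; ring
    rw [Finset.sum_congr rfl fun x _ => Finset.sum_congr rfl fun y _ =>
      Finset.sum_congr rfl fun s _ => step1 x y s]
    rw [sum_swap3 (fun x y s => P x y s * ruleF (condYS P s) (condYS P smax) y y)]
    have step2 : ∀ s, ∑ y, ∑ x, P x y s * ruleF (condYS P s) (condYS P smax) y y
        = margS P s * (1 - Dgap (condYS P s) (condYS P smax)) := by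
      intro s
      have : ∀ y, ∑ x, P x y s * ruleF (condYS P s) (condYS P smax) y y
          = margS P s * (condYS P s y * ruleF (condYS P s) (condYS P smax) y y) := by
        intro y
        rw [← Finset.sum_mul, ha_eq s y]; ring
      rw [Finset.sum_congr rfl fun y _ => this y, ← Finset.mul_sum,
        ruleF_diag _ _ (hps0 s) (hps1 s) (hps0 smax) (hps1 smax)]
    rw [Finset.sum_congr rfl fun s _ => step2 s]
    exact hident (fun s => Dgap (condYS P s) (condYS P smax))
  -- upper bound on the optimal risk
  have hub : risk P Q ≤ ∑ s, margS P s * Dgap (condYS P s) (condYS P smax) := by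
    rw [← hrisk']
    exact hopt Q' hQ'rule hfairQ'
  -- triangle inequality for Dgap
  have htri : ∀ s, Dgap (condYS P s) (condYS P smax) - Dgap (condYS P smax) (margYhat P Q)
      ≤ Dgap (condYS P s) (margYhat P Q) := by
    intro s
    rw [Dgap_eq _ _ (hps1 s) (hps1 smax), Dgap_eq _ _ (hps1 smax) hqsum,
      Dgap_eq _ _ (hps1 s) hqsum]
    have habs : ∑ y, |condYS P s y - condYS P smax y|
        ≤ ∑ y, |condYS P s y - margYhat P Q y| + ∑ y, |condYS P smax y - margYhat P Q y| := by
      rw [← Finset.sum_add_distrib]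
      apply Finset.sum_le_sum; intro y _
      have h1 : condYS P s y - condYS P smax y
          = (condYS P s y - margYhat P Q y) + -(condYS P smax y - margYhat P Q y) := by ring
      rw [h1]
      refine (abs_add_le _ _).trans ?_
      rw [abs_neg]
    linarith
  -- key combined inequality
  have hpmpm : Dgap (condYS P smax) (condYS P smax) = 0 := by
    rw [Dgap]
    have : ∀ y : 𝒴, min (condYS P smax y) (condYS P smax y) = condYS P smax y :=
      fun y => min_self _
    rw [Finset.sum_congr rfl fun y _ => this y, hps1 smax]; ring
  have hkey : ∑ s, margS P s * Dgap (condYS P s) (condYS P smax)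
      + (2 * margS P smax - 1) * Dgap (condYS P smax) (margYhat P Q)
      ≤ ∑ s, margS P s * Dgap (condYS P s) (margYhat P Q) := by
    have hterm : ∀ s ∈ Finset.univ, (0:ℝ) ≤ margS P s *
        (Dgap (condYS P s) (margYhat P Q) - Dgap (condYS P s) (condYS P smax)
          + Dgap (condYS P smax) (margYhat P Q)) :=
      fun s _ => mul_nonneg (hS s).le (by linarith [htri s])
    have hsingle := Finset.single_le_sum hterm (Finset.mem_univ smax)
    have hmaxterm : 2 * margS P smax * Dgap (condYS P smax) (margYhat P Q)
        ≤ ∑ s, margS P s *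
          (Dgap (condYS P s) (margYhat P Q) - Dgap (condYS P s) (condYS P smax)
            + Dgap (condYS P smax) (margYhat P Q)) := by
      refine le_trans (le_of_eq ?_) hsingle
      rw [hpmpm]; ring
    have hexp : ∑ s, margS P s *
        (Dgap (condYS P s) (margYhat P Q) - Dgap (condYS P s) (condYS P smax)
          + Dgap (condYS P smax) (margYhat P Q))
        = ∑ s, margS P s * Dgap (condYS P s) (margYhat P Q)
          - ∑ s, margS P s * Dgap (condYS P s) (condYS P smax)
          + Dgap (condYS P smax) (margYhat P Q) := by
      have : ∀ s, margS P s *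
          (Dgap (condYS P s) (margYhat P Q) - Dgap (condYS P s) (condYS P smax)
            + Dgap (condYS P smax) (margYhat P Q))
          = margS P s * Dgap (condYS P s) (margYhat P Q)
            - margS P s * Dgap (condYS P s) (condYS P smax)
            + margS P s * Dgap (condYS P smax) (margYhat P Q) := by
        intro s; ring
      rw [Finset.sum_congr rfl fun s _ => this s, Finset.sum_add_distrib,
        Finset.sum_sub_distrib, ← Finset.sum_mul, hmsum, one_mul]
    linarith
  -- conclude Dgap (pm) q = 0
  have hdelta0 : Dgap (condYS P smax) (margYhat P Q) = 0 := by
    have h1 : 0 ≤ Dgap (condYS P smax) (margYhat P Q) := Dgap_nonneg _ _ (hps1 smax)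
    have h2 : (2 * margS P smax - 1) * Dgap (condYS P smax) (margYhat P Q) ≤ 0 := by
      linarith
    nlinarith
  -- pointwise equality
  have hqpm : ∀ y, margYhat P Q y = condYS P smax y := by
    have h1 : ∑ y, |condYS P smax y - margYhat P Q y| = 0 := by
      have := Dgap_eq (condYS P smax) (margYhat P Q) (hps1 smax) hqsum
      rw [hdelta0] at this
      linarith
    intro y
    have h2 : |condYS P smax y - margYhat P Q y| = 0 :=
      (Finset.sum_eq_zero_iff_of_nonneg fun z _ => abs_nonneg _).mp h1 y (Finset.mem_univ y)
    have := abs_eq_zero.mp h2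
    linarith
  intro s yh
  rw [hfair s yh]
  exact hqpm yh
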